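/- Let f : 2^T → ℝ≥0 be monotone submodular with f(∅)=0, and let c : T → ℝ≥0 be additive costs. Suppose S ⊆ T, α > 0, and for every j ∈ S the marginal f(S) - f(S \ {j}) ≥ c(j)/α. Then S is subset-stable at payment 2α for the single-agent problem: for every S' ⊆ S, 2α·f(S) - Σ_{j∈S} c(j) ≥ 2α·f(S') - Σ_{j∈S'} c(j). -/

import Mathlib

lemma key_sdiff {T : Type*} [DecidableEq T] (f : Finset T → ℝ)
    (hsubmod : ∀ A B : Finset T, f (A ∪ B) + f (A ∩ B) ≤ f A + f B)
    (S : Finset T) :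
    ∀ D : Finset T, D ⊆ S →
      f S - f (S \ D) ≥ ∑ j ∈ D, (f S - f (S.erase j)) := by
  intro D
  induction D using Finset.induction_on with
  | empty => simp
  | @insert a D0 ha ih =>
    intro hsub
    have haS : a ∈ S := hsub (Finset.mem_insert_self a D0)
    have hD0 : D0 ⊆ S := fun x hx => hsub (Finset.mem_insert_of_mem hx)
    have haD0 : a ∈ S \ D0 := Finset.mem_sdiff.mpr ⟨haS, ha⟩
    have hunion : S.erase a ∪ (S \ D0) = S := by
      apply Finset.Subset.antisymm
      · exact Finset.union_subset (Finset.erase_subset _ _) (Finset.sdiff_subset)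
      · intro x hx
        by_cases hxa : x = a
        · exact Finset.mem_union_right _ (hxa ▸ haD0)
        · exact Finset.mem_union_left _ (Finset.mem_erase.mpr ⟨hxa, hx⟩)
    have hinter : S.erase a ∩ (S \ D0) = S \ insert a D0 := by
      ext x
      simp [Finset.mem_erase, Finset.mem_sdiff, Finset.mem_insert]
      tauto
    have hsm := hsubmod (S.erase a) (S \ D0)
    rw [hunion, hinter] at hsm
    rw [Finset.sum_insert ha]
    have := ih hD0
    linarith

/-- If `f` is monotone submodular with `f ∅ = 0`, costs `c ≥ 0`,
`α > 0`, and every `j ∈ S` satisfies `f S - f (S \ {j}) ≥ c j / α`, then `S`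
is subset-stable at payment `2α`: for every `S' ⊆ S`,
`2α f S - c(S) ≥ 2α f S' - c(S')`. -/
theorem stmt_12 {T : Type*} [DecidableEq T] (f : Finset T → ℝ) (c : T → ℝ)
    (hmono : ∀ A B : Finset T, A ⊆ B → f A ≤ f B)
    (hsubmod : ∀ A B : Finset T, f (A ∪ B) + f (A ∩ B) ≤ f A + f B)
    (hempty : f ∅ = 0)
    (hc : ∀ j, 0 ≤ c j)
    (α : ℝ) (hα : 0 < α)
    (S : Finset T)
    (hmarg : ∀ j ∈ S, f S - f (S.erase j) ≥ c j / α) :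
    ∀ S' ⊆ S,
      2 * α * f S - ∑ j ∈ S, c j ≥ 2 * α * f S' - ∑ j ∈ S', c j := by
  intro S' hS'
  have hkey := key_sdiff f hsubmod S (S \ S') Finset.sdiff_subset
  have hSS' : S \ (S \ S') = S' := Finset.sdiff_sdiff_eq_self hS'
  rw [hSS'] at hkey
  have hsum : ∑ j ∈ S \ S', (f S - f (S.erase j)) ≥ ∑ j ∈ S \ S', c j / α := by
    apply Finset.sum_le_sum
    intro j hj
    exact hmarg j (Finset.mem_sdiff.mp hj).1
  have hcs : ∑ j ∈ S \ S', c j = ∑ j ∈ S, c j - ∑ j ∈ S', c j := by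
    rw [eq_sub_iff_add_eq, Finset.sum_sdiff hS']
  have hcsum : ∑ j ∈ S \ S', c j / α = (∑ j ∈ S, c j - ∑ j ∈ S', c j) / α := by
    rw [← hcs, Finset.sum_div]
  have h1 : f S - f S' ≥ (∑ j ∈ S, c j - ∑ j ∈ S', c j) / α := by
    rw [← hcsum]; linarith
  have h2 : α * (f S - f S') ≥ ∑ j ∈ S, c j - ∑ j ∈ S', c j := by
    have := mul_le_mul_of_nonneg_left h1 hα.le
    rwa [mul_div_cancel₀ _ hα.ne'] at this
  have h3 : 0 ≤ ∑ j ∈ S, c j - ∑ j ∈ S', c j := by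
    rw [← hcs]; exact Finset.sum_nonneg fun j _ => hc j
  nlinarith
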